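/- Let F : D_N × D_n → D_N be Lipschitz continuous and a contraction in its first argument with constant 0 < c < 1, let w be a weighting sequence with finite inverse decay ratio L_w satisfying c·L_w < 1, and suppose (D_N)^{ℤ₋} ∩ ℓ^w_-(ℝᴺ) is complete and the system x_t = F(x_{t-1}, z_t) admits at least one solution (x⁰, z⁰) with x⁰ ∈ ℓ^w_-(ℝᴺ), z⁰ ∈ V_n ⊆ (D_n)^{ℤ₋} ∩ ℓ^w_-(ℝⁿ). Then for every input z ∈ V_n there exists a unique x ∈ (D_N)^{ℤ₋} ∩ ℓ^w_-(ℝᴺ) with x_t = F(x_{t-1}, z_t) for all t ≤ 0 (echo state property), and the resulting map U^F : V_n → ℓ^w_-(ℝᴺ) is continuous with respect to ‖·‖_w on domain and target. -/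

import Mathlib

open Filter
open scoped ENNReal NNReal

/-- A weighting sequence: strictly decreasing, valued in `(0,1]`, with `w 0 = 1`
and zero limit. Sequences `z : ℤ₋ → ℝⁿ` are represented as `z : ℕ → (Fin n → ℝ)`,
where index `t : ℕ` stands for the time `-t`, so `w_{-t}` is `w t`. -/
def IsWeighting (w : ℕ → ℝ) : Prop :=
  StrictAnti w ∧ (∀ t, 0 < w t) ∧ (∀ t, w t ≤ 1) ∧ w 0 = 1 ∧
    Tendsto w atTop (nhds 0)


/-- Membership in the weighted space `ℓ^w_-`: finite weighted sup norm. -/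
def memLw {E : Type*} [NormedAddCommGroup E] (w : ℕ → ℝ) (z : ℕ → E) : Prop :=
  BddAbove (Set.range fun t => ‖z t‖ * w t)

/-- The weighted norm `‖z‖_w = sup_t ‖z_t‖ w_{-t}`. -/
noncomputable def wNorm {E : Type*} [NormedAddCommGroup E] (w : ℕ → ℝ) (z : ℕ → E) : ℝ :=
  ⨆ t, ‖z t‖ * w t

section ESPhelpers

variable {E : Type*} [NormedAddCommGroup E] {w : ℕ → ℝ} {a b d : ℕ → E}

lemma espMemLw_of_bound {M : ℝ} (h : ∀ k, ‖a k‖ * w k ≤ M) : memLw w a :=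
  ⟨M, by rintro y ⟨k, rfl⟩; exact h k⟩

lemma espWNorm_le_of_bound {M : ℝ} (h : ∀ k, ‖a k‖ * w k ≤ M) : wNorm w a ≤ M :=
  ciSup_le h

lemma espLe_wNorm (h : memLw w a) (k : ℕ) : ‖a k‖ * w k ≤ wNorm w a :=
  le_ciSup h k

lemma espWNorm_nonneg (hw : ∀ k, 0 ≤ w k) (h : memLw w a) : 0 ≤ wNorm w a :=
  (mul_nonneg (norm_nonneg _) (hw 0)).trans (espLe_wNorm h 0)

lemma espWNorm_sub_comm : wNorm w (a - b) = wNorm w (b - a) := by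
  unfold wNorm
  congr 1
  funext t
  rw [Pi.sub_apply, Pi.sub_apply, norm_sub_rev]

lemma espWNorm_sub_self : wNorm w (a - a) = 0 := by
  unfold wNorm
  simp [ciSup_const]

lemma espMemLw_sub (hw : ∀ k, 0 ≤ w k) (ha : memLw w a) (hb : memLw w b) :
    memLw w (a - b) := by
  apply espMemLw_of_bound (M := wNorm w a + wNorm w b)
  intro k
  have h1 := espLe_wNorm ha k
  have h2 := espLe_wNorm hb k
  have h3 : ‖a k - b k‖ ≤ ‖a k‖ + ‖b k‖ := norm_sub_le _ _
  simp only [Pi.sub_apply]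
  nlinarith [hw k, norm_nonneg (a k), norm_nonneg (b k)]

lemma espWNorm_triangle (hw : ∀ k, 0 ≤ w k) (h1 : memLw w (a - b)) (h2 : memLw w (b - d)) :
    wNorm w (a - d) ≤ wNorm w (a - b) + wNorm w (b - d) := by
  apply espWNorm_le_of_bound
  intro k
  have t1 := espLe_wNorm h1 k
  have t2 := espLe_wNorm h2 k
  have h3 : ‖a k - d k‖ ≤ ‖a k - b k‖ + ‖b k - d k‖ := by
    simpa [dist_eq_norm] using dist_triangle (a k) (b k) (d k)
  simp only [Pi.sub_apply] at *
  nlinarith [hw k]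

lemma espWNorm_shift_le (hwpos : ∀ t, 0 < w t) {Lw : ℝ}
    (hLw : ∀ t, w t / w (t + 1) ≤ Lw) (ha : memLw w a) (k : ℕ) :
    ‖a (k + 1)‖ * w k ≤ Lw * wNorm w a := by
  have h1 : ‖a (k + 1)‖ * w (k + 1) ≤ wNorm w a := espLe_wNorm ha (k + 1)
  have hpos := hwpos (k + 1)
  have heq : ‖a (k + 1)‖ * w k = (‖a (k + 1)‖ * w (k + 1)) * (w k / w (k + 1)) := by
    field_simp
  rw [heq]
  have := mul_le_mul h1 (hLw k) (div_nonneg (hwpos k).le hpos.le)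
    (espWNorm_nonneg (fun t => (hwpos t).le) ha)
  exact this.trans (le_of_eq (mul_comm _ _))

end ESPhelpers

/-- Echo state property and continuity of the reservoir filter for Lipschitz
reservoir maps that are contractions in the state variable, with `c L_w < 1`, for
inputs that are not necessarily bounded. In our indexing `k : ℕ` stands for time
`-k`, so the reservoir equation `x_t = F(x_{t-1}, z_t)` reads
`x k = F (x (k+1)) (z k)`. -/
theorem echo_state_and_fmp (n N : ℕ) (Dn : Set (Fin n → ℝ)) (DN : Set (Fin N → ℝ))
    (F : (Fin N → ℝ) → (Fin n → ℝ) → (Fin N → ℝ))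
    (hmap : ∀ x ∈ DN, ∀ z ∈ Dn, F x z ∈ DN)
    (cF : ℝ) (hLipF : ∀ x1 ∈ DN, ∀ x2 ∈ DN, ∀ z1 ∈ Dn, ∀ z2 ∈ Dn,
      ‖F x1 z1 - F x2 z2‖ ≤ cF * (‖x1 - x2‖ + ‖z1 - z2‖))
    (c : ℝ) (hc0 : 0 < c) (hc1 : c < 1)
    (hcontr : ∀ x1 ∈ DN, ∀ x2 ∈ DN, ∀ z ∈ Dn, ‖F x1 z - F x2 z‖ ≤ c * ‖x1 - x2‖)
    (w : ℕ → ℝ) (hw : IsWeighting w)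
    (Lw : ℝ) (hLw : ∀ t, w t / w (t + 1) ≤ Lw) (hcLw : c * Lw < 1)
    -- completeness of `(DN)^{ℤ₋} ∩ ℓ^w_-(ℝᴺ)` for the weighted norm
    (hcomplete : ∀ u : ℕ → (ℕ → (Fin N → ℝ)),
      (∀ m, (∀ t, u m t ∈ DN) ∧ memLw w (u m)) →
      (∀ ε : ℝ, 0 < ε → ∃ M, ∀ p ≥ M, ∀ q ≥ M, wNorm w (u p - u q) < ε) →
      ∃ x : ℕ → (Fin N → ℝ), ((∀ t, x t ∈ DN) ∧ memLw w x) ∧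
        Tendsto (fun m => wNorm w (u m - x)) atTop (nhds 0))
    (Vn : Set (ℕ → (Fin n → ℝ)))
    (hVn : ∀ z ∈ Vn, (∀ t, z t ∈ Dn) ∧ memLw w z)
    (hVninv : ∀ k : ℕ, (fun z : ℕ → (Fin n → ℝ) => fun j => z (j + k)) '' Vn = Vn)
    -- a preexisting solution of the reservoir system
    (x0 : ℕ → (Fin N → ℝ)) (z0 : ℕ → (Fin n → ℝ))
    (hx0 : (∀ t, x0 t ∈ DN) ∧ memLw w x0) (hz0 : z0 ∈ Vn)
    (hsol : ∀ k, x0 k = F (x0 (k + 1)) (z0 k)) :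
    -- echo state property on `Vn` ...
    (∀ z ∈ Vn, ∃! x : ℕ → (Fin N → ℝ),
      ((∀ t, x t ∈ DN) ∧ memLw w x) ∧ ∀ k, x k = F (x (k + 1)) (z k)) ∧
    -- ... and continuity of the induced reservoir filter w.r.t. `‖·‖_w`
    (∀ z ∈ Vn, ∀ x : ℕ → (Fin N → ℝ),
      ((∀ t, x t ∈ DN) ∧ memLw w x) → (∀ k, x k = F (x (k + 1)) (z k)) →
      ∀ ε : ℝ, 0 < ε → ∃ δ > (0 : ℝ), ∀ z' ∈ Vn, ∀ x' : ℕ → (Fin N → ℝ),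
        ((∀ t, x' t ∈ DN) ∧ memLw w x') → (∀ k, x' k = F (x' (k + 1)) (z' k)) →
        wNorm w (z - z') < δ → wNorm w (x - x') < ε) := by
  
  obtain ⟨hwSA, hwpos, hwle1, hw01, hwlim⟩ := hw
  have hwn : ∀ t, (0:ℝ) ≤ w t := fun t => (hwpos t).le
  set C := max cF 1 with hC
  have hC1 : (1:ℝ) ≤ C := le_max_right _ _
  have hC0 : (0:ℝ) < C := lt_of_lt_of_le one_pos hC1
  have hcFC : cF ≤ C := le_max_left _ _
  have hLw0 : 0 < Lw := lt_of_lt_of_le (div_pos (hwpos 0) (hwpos 1)) (hLw 0)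
  have h1ρ : 0 < 1 - c * Lw := by linarith
  -- Lipschitz in the input variable
  have hLipz : ∀ x ∈ DN, ∀ z1 ∈ Dn, ∀ z2 ∈ Dn, ‖F x z1 - F x z2‖ ≤ C * ‖z1 - z2‖ := by
    intro x hx z1 h1 z2 h2
    have h := hLipF x hx x hx z1 h1 z2 h2
    have h0 : ‖x - x‖ = (0:ℝ) := by simp
    have hn := norm_nonneg (z1 - z2)
    nlinarith [h, h0, hn, hcFC]
  -- master pointwise estimate
  have master : ∀ (z1 z2 : ℕ → Fin n → ℝ), (∀ t, z1 t ∈ Dn) → (∀ t, z2 t ∈ Dn) →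
      memLw w z1 → memLw w z2 →
      ∀ (a b : ℕ → Fin N → ℝ), (∀ t, a t ∈ DN) → (∀ t, b t ∈ DN) →
      memLw w a → memLw w b → ∀ k,
      ‖F (a (k+1)) (z1 k) - F (b (k+1)) (z2 k)‖ * w k ≤
        c * Lw * wNorm w (a - b) + C * wNorm w (z1 - z2) := by
    intro z1 z2 hz1 hz2 hz1w hz2w a b ha hb haw hbw k
    have hab : memLw w (a - b) := espMemLw_sub hwn haw hbw
    have hzz : memLw w (z1 - z2) := espMemLw_sub hwn hz1w hz2w
    have t1 : ‖F (a (k+1)) (z1 k) - F (b (k+1)) (z2 k)‖ ≤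
        c * ‖a (k+1) - b (k+1)‖ + C * ‖z1 k - z2 k‖ := by
      have s1 := hcontr (a (k+1)) (ha _) (b (k+1)) (hb _) (z1 k) (hz1 k)
      have s2 := hLipz (b (k+1)) (hb _) (z1 k) (hz1 k) (z2 k) (hz2 k)
      have tri : ‖F (a (k+1)) (z1 k) - F (b (k+1)) (z2 k)‖ ≤
          ‖F (a (k+1)) (z1 k) - F (b (k+1)) (z1 k)‖ +
          ‖F (b (k+1)) (z1 k) - F (b (k+1)) (z2 k)‖ := by
        simpa [dist_eq_norm] using
          dist_triangle (F (a (k+1)) (z1 k)) (F (b (k+1)) (z1 k)) (F (b (k+1)) (z2 k))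
      linarith
    have t2 : ‖(a - b) (k+1)‖ * w k ≤ Lw * wNorm w (a - b) :=
      espWNorm_shift_le hwpos hLw hab k
    have t3 : ‖(z1 - z2) k‖ * w k ≤ wNorm w (z1 - z2) := espLe_wNorm hzz k
    simp only [Pi.sub_apply] at t2 t3
    have hwk := hwn k
    have m1 := mul_le_mul_of_nonneg_right t1 hwk
    have m2 := mul_le_mul_of_nonneg_left t2 hc0.le
    have m3 := mul_le_mul_of_nonneg_left t3 hC0.le
    nlinarith [m1, m2, m3]
  -- key comparison of two solutions
  have key : ∀ (z1 z2 : ℕ → Fin n → ℝ), (∀ t, z1 t ∈ Dn) → (∀ t, z2 t ∈ Dn) →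
      memLw w z1 → memLw w z2 →
      ∀ (a b : ℕ → Fin N → ℝ), ((∀ t, a t ∈ DN) ∧ memLw w a) →
      ((∀ t, b t ∈ DN) ∧ memLw w b) →
      (∀ k, a k = F (a (k+1)) (z1 k)) → (∀ k, b k = F (b (k+1)) (z2 k)) →
      wNorm w (a - b) * (1 - c * Lw) ≤ C * wNorm w (z1 - z2) := by
    intro z1 z2 hz1 hz2 hz1w hz2w a b ha hb hae hbe
    obtain ⟨haD, haw⟩ := ha
    obtain ⟨hbD, hbw⟩ := hb
    have hS : wNorm w (a - b) ≤ c * Lw * wNorm w (a - b) + C * wNorm w (z1 - z2) := by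
      apply espWNorm_le_of_bound
      intro k
      have hm := master z1 z2 hz1 hz2 hz1w hz2w a b haD hbD haw hbw k
      calc ‖(a - b) k‖ * w k
          = ‖F (a (k+1)) (z1 k) - F (b (k+1)) (z2 k)‖ * w k := by
            simp only [Pi.sub_apply]; rw [hae k, hbe k]
        _ ≤ _ := hm
    nlinarith [hS]
  constructor
  · -- echo state property
    intro z hz
    obtain ⟨hzDn, hzLw⟩ := hVn z hz
    obtain ⟨hz0Dn, hz0Lw⟩ := hVn z0 hz0
    set Φ : (ℕ → Fin N → ℝ) → ℕ → Fin N → ℝ := fun x k => F (x (k+1)) (z k) with hΦdef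
    have hΦapp : ∀ x k, Φ x k = F (x (k+1)) (z k) := fun x k => by rw [hΦdef]
    set u : ℕ → ℕ → Fin N → ℝ := fun m => Φ^[m] x0 with hudef
    have hu0 : u 0 = x0 := by rw [hudef]; simp
    have husucc : ∀ m, u (m+1) = Φ (u m) := by
      intro m
      rw [hudef]
      exact Function.iterate_succ_apply' Φ m x0
    have props : ∀ m, (∀ t, u m t ∈ DN) ∧ memLw w (u m) := by
      intro m
      induction m with
      | zero => rw [hu0]; exact hx0
      | succ m ih =>
        rw [husucc m]
        refine ⟨fun t => by rw [hΦapp]; exact hmap _ (ih.1 _) _ (hzDn t), ?_⟩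
        apply espMemLw_of_bound
          (M := c * Lw * wNorm w (u m - x0) + C * wNorm w (z - z0) + wNorm w x0)
        intro k
        have hm := master z z0 hzDn hz0Dn hzLw hz0Lw (u m) x0 ih.1 hx0.1 ih.2 hx0.2 k
        have heq : ‖Φ (u m) k - x0 k‖ = ‖F (u m (k+1)) (z k) - F (x0 (k+1)) (z0 k)‖ := by
          rw [hΦapp (u m) k, hsol k]
        have tri : ‖Φ (u m) k‖ ≤ ‖Φ (u m) k - x0 k‖ + ‖x0 k‖ := by
          have e : Φ (u m) k = (Φ (u m) k - x0 k) + x0 k := by abel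
          calc ‖Φ (u m) k‖ = ‖(Φ (u m) k - x0 k) + x0 k‖ := by rw [← e]
            _ ≤ _ := norm_add_le _ _
        have hx0b := espLe_wNorm hx0.2 k
        have hwk := hwn k
        calc ‖Φ (u m) k‖ * w k
            ≤ (‖Φ (u m) k - x0 k‖ + ‖x0 k‖) * w k := mul_le_mul_of_nonneg_right tri hwk
          _ = ‖F (u m (k+1)) (z k) - F (x0 (k+1)) (z0 k)‖ * w k + ‖x0 k‖ * w k := by
              rw [heq]; ring
          _ ≤ (c * Lw * wNorm w (u m - x0) + C * wNorm w (z - z0)) + wNorm w x0 :=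
              add_le_add hm hx0b
          _ = _ := by ring
    have contrΦ : ∀ a b : ℕ → Fin N → ℝ, (∀ t, a t ∈ DN) → (∀ t, b t ∈ DN) →
        memLw w a → memLw w b →
        wNorm w (Φ a - Φ b) ≤ c * Lw * wNorm w (a - b) := by
      intro a b haD hbD haw hbw
      apply espWNorm_le_of_bound
      intro k
      have hm := master z z hzDn hzDn hzLw hzLw a b haD hbD haw hbw k
      have h0 : wNorm w (z - z) = 0 := espWNorm_sub_self
      rw [h0] at hm
      simp only [Pi.sub_apply]
      rw [hΦapp a k, hΦapp b k]
      linarith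
    have Dm : ∀ m, wNorm w (u m - u (m+1)) ≤ (c*Lw)^m * wNorm w (u 0 - u 1) := by
      intro m
      induction m with
      | zero => simp
      | succ m ih =>
        have e1 : u (m+1) - u (m+1+1) = Φ (u m) - Φ (u (m+1)) := by
          rw [husucc (m+1), husucc m]
        rw [e1]
        calc wNorm w (Φ (u m) - Φ (u (m+1)))
            ≤ c * Lw * wNorm w (u m - u (m+1)) :=
              contrΦ _ _ (props m).1 (props (m+1)).1 (props m).2 (props (m+1)).2
          _ ≤ c * Lw * ((c*Lw)^m * wNorm w (u 0 - u 1)) := by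
              apply mul_le_mul_of_nonneg_left ih (by positivity)
          _ = (c*Lw)^(m+1) * wNorm w (u 0 - u 1) := by ring
    have K0 : 0 ≤ wNorm w (u 0 - u 1) :=
      espWNorm_nonneg hwn (espMemLw_sub hwn (props 0).2 (props 1).2)
    have hne : (1 - c * Lw) ≠ 0 := h1ρ.ne'
    have hQ0 : 0 ≤ wNorm w (u 0 - u 1) / (1 - c*Lw) := div_nonneg K0 h1ρ.le
    have geo : ∀ l p, wNorm w (u p - u (p + l)) ≤
        (c*Lw)^p * (wNorm w (u 0 - u 1) / (1 - c*Lw)) := by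
      intro l
      induction l with
      | zero =>
        intro p
        simp only [Nat.add_zero]
        rw [espWNorm_sub_self]
        positivity
      | succ l ih =>
        intro p
        have h1 : wNorm w (u p - u (p + (l+1))) ≤
            wNorm w (u p - u (p+1)) + wNorm w (u (p+1) - u (p + (l+1))) :=
          espWNorm_triangle hwn (espMemLw_sub hwn (props p).2 (props (p+1)).2)
            (espMemLw_sub hwn (props (p+1)).2 (props _).2)
        have h2 : u (p + (l+1)) = u ((p+1) + l) := by
          rw [show p + (l+1) = (p+1) + l from by omega]
        have h3 := ih (p+1)
        have h4 := Dm p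
        rw [h2] at h1 ⊢
        have halg : (c*Lw)^p * wNorm w (u 0 - u 1) +
            (c*Lw)^(p+1) * (wNorm w (u 0 - u 1) / (1 - c*Lw)) =
            (c*Lw)^p * (wNorm w (u 0 - u 1) / (1 - c*Lw)) := by
          field_simp
          ring
        linarith
    have cauchy : ∀ ε : ℝ, 0 < ε → ∃ M, ∀ p ≥ M, ∀ q ≥ M, wNorm w (u p - u q) < ε := by
      intro ε hε
      have hlim : Tendsto (fun m => (c*Lw)^m * (wNorm w (u 0 - u 1) / (1 - c*Lw)))
          atTop (nhds 0) := by
        have h := tendsto_pow_atTop_nhds_zero_of_lt_one (by positivity : (0:ℝ) ≤ c*Lw) hcLw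
        simpa using h.mul_const (wNorm w (u 0 - u 1) / (1 - c*Lw))
      have hev := hlim.eventually (gt_mem_nhds hε)
      rw [eventually_atTop] at hev
      obtain ⟨M, hM⟩ := hev
      refine ⟨M, ?_⟩
      have main : ∀ p q, M ≤ p → p ≤ q → wNorm w (u p - u q) < ε := by
        intro p q hMp hpq
        have hg : wNorm w (u p - u q) ≤
            (c*Lw)^p * (wNorm w (u 0 - u 1) / (1 - c*Lw)) := by
          have hgeo := geo (q - p) p
          rw [Nat.add_sub_cancel' hpq] at hgeo
          exact hgeo
        have hle : (c*Lw)^p * (wNorm w (u 0 - u 1) / (1 - c*Lw)) ≤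
            (c*Lw)^M * (wNorm w (u 0 - u 1) / (1 - c*Lw)) :=
          mul_le_mul_of_nonneg_right
            (pow_le_pow_of_le_one (by positivity) hcLw.le hMp) hQ0
        have := hM M le_rfl
        linarith
      intro p hp q hq
      rcases le_total p q with h | h
      · exact main p q hp h
      · rw [espWNorm_sub_comm]; exact main q p hq h
    obtain ⟨x, hxmem, hxconv⟩ := hcomplete u props cauchy
    have ptw : ∀ k, Tendsto (fun m => ‖u m k - x k‖) atTop (nhds 0) := by
      intro k
      apply squeeze_zero (fun m => norm_nonneg _)
        (g := fun m => wNorm w (u m - x) / w k)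
      · intro m
        have h := espLe_wNorm (espMemLw_sub hwn (props m).2 hxmem.2) k
        simp only [Pi.sub_apply] at h
        exact (le_div_iff₀ (hwpos k)).2 h
      · simpa using hxconv.div_const (w k)
    have eqn : ∀ k, x k = F (x (k+1)) (z k) := by
      intro k
      have hb : ∀ m, ‖x k - F (x (k+1)) (z k)‖ ≤
          ‖u (m+1) k - x k‖ + c * ‖u m (k+1) - x (k+1)‖ := by
        intro m
        have e : u (m+1) k = F (u m (k+1)) (z k) := by rw [husucc m, hΦapp]
        have tri : ‖x k - F (x (k+1)) (z k)‖ ≤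
            ‖x k - u (m+1) k‖ + ‖u (m+1) k - F (x (k+1)) (z k)‖ := by
          simpa [dist_eq_norm] using dist_triangle (x k) (u (m+1) k) (F (x (k+1)) (z k))
        have hc' : ‖u (m+1) k - F (x (k+1)) (z k)‖ ≤ c * ‖u m (k+1) - x (k+1)‖ := by
          rw [e]
          exact hcontr _ ((props m).1 _) _ (hxmem.1 _) _ (hzDn k)
        have hrev : ‖x k - u (m+1) k‖ = ‖u (m+1) k - x k‖ := norm_sub_rev _ _
        linarith
      have hlim : Tendsto (fun m => ‖u (m+1) k - x k‖ + c * ‖u m (k+1) - x (k+1)‖)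
          atTop (nhds 0) := by
        have t1 : Tendsto (fun m => ‖u (m+1) k - x k‖) atTop (nhds 0) := by
          have := (ptw k).comp (tendsto_add_atTop_nat 1)
          simpa [Function.comp_def] using this
        have t2 : Tendsto (fun m => c * ‖u m (k+1) - x (k+1)‖) atTop (nhds 0) := by
          simpa using (ptw (k+1)).const_mul c
        simpa using t1.add t2
      have h0 : ‖x k - F (x (k+1)) (z k)‖ ≤ 0 := ge_of_tendsto' hlim hb
      have h1 : x k - F (x (k+1)) (z k) = 0 := norm_le_zero_iff.1 h0
      exact sub_eq_zero.1 h1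
    refine ⟨x, ⟨hxmem, eqn⟩, ?_⟩
    rintro y ⟨hymem, hyeq⟩
    have hk := key z z hzDn hzDn hzLw hzLw y x hymem hxmem hyeq eqn
    rw [espWNorm_sub_self] at hk
    have hSnn : 0 ≤ wNorm w (y - x) :=
      espWNorm_nonneg hwn (espMemLw_sub hwn hymem.2 hxmem.2)
    have hS0 : wNorm w (y - x) ≤ 0 := by nlinarith [hk, hSnn, h1ρ]
    funext k
    have hle := espLe_wNorm (espMemLw_sub hwn hymem.2 hxmem.2) k
    simp only [Pi.sub_apply] at hle
    have hnn := norm_nonneg (y k - x k)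
    have hwk := hwpos k
    have hnz : ‖y k - x k‖ = 0 := by nlinarith
    exact sub_eq_zero.1 (norm_eq_zero.1 hnz)
  · -- continuity
    intro z hz x hxm hxe ε hε
    obtain ⟨hzDn, hzLw⟩ := hVn z hz
    refine ⟨(1 - c*Lw) * ε / C, div_pos (mul_pos h1ρ hε) hC0, ?_⟩
    intro z' hz' x' hx'm hx'e hzz
    obtain ⟨hz'Dn, hz'Lw⟩ := hVn z' hz'
    have hk := key z z' hzDn hz'Dn hzLw hz'Lw x x' hxm hx'm hxe hx'e
    have hmul : C * wNorm w (z - z') < C * ((1 - c*Lw) * ε / C) :=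
      mul_lt_mul_of_pos_left hzz hC0
    have hCδ : C * ((1 - c*Lw) * ε / C) = (1 - c*Lw) * ε := by field_simp
    have hSnn : 0 ≤ wNorm w (x - x') :=
      espWNorm_nonneg hwn (espMemLw_sub hwn hxm.2 hx'm.2)
    nlinarith [hk, hmul, hCδ, h1ρ, hSnn]
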